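/- Let p be a categorical distribution on m outcomes and let P̂_n denote its empirical (frequency) estimate from n i.i.d. samples. Then P(∃ n ∈ ℕ, n·KL(P̂_n, p) > log(1/δ) + (m−1)·log(e(1 + n/(m−1)))) ≤ δ. -/

import Mathlib

open MeasureTheory ProbabilityTheory

/-- Empirical frequency of outcome `j` among the first `n` i.i.d. samples `X_0, …, X_{n−1}`. -/
noncomputable def empFreq {Ω : Type*} {m : ℕ} (X : ℕ → Ω → Fin m) (n : ℕ) (ω : Ω)
    (j : Fin m) : ℝ :=
  (((Finset.range n).filter (fun i => X i ω = j)).card : ℝ) / n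

/-- KL divergence between probability vectors on `Fin m`. -/
noncomputable def KLvec {m : ℕ} (q p : Fin m → ℝ) : ℝ :=
  ∑ j, q j * Real.log (q j / p j)

section Aux
open Finset

lemma binom_term_le (s a : ℕ) : (s+a).choose a * (s^s * a^a) ≤ (s+a)^(s+a) := by
  have h := add_pow s a (s+a)
  have hs : s ∈ Finset.range (s+a+1) := by simp
  have hterm : s^s * a^(s+a-s) * (s+a).choose s = (s+a).choose a * (s^s * a^a) := by
    have h1 : s + a - s = a := by omega
    have h2 : (s+a).choose s = (s+a).choose a := by
      rw [← Nat.choose_symm (by omega : a ≤ s + a)]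
      congr 1; omega
    rw [h1, h2]; ring
  calc (s+a).choose a * (s^s * a^a) = s^s * a^(s+a-s) * (s+a).choose s := hterm.symm
    _ ≤ ∑ k ∈ Finset.range (s+a+1), s^k * a^(s+a-k) * (s+a).choose k :=
        Finset.single_le_sum (f := fun k => s^k * a^(s+a-k) * (s+a).choose k) (fun _ _ => Nat.zero_le _) hs
    _ = (s+a)^(s+a) := h.symm

lemma fact_mul_prod_le : ∀ (M : ℕ) (c : Fin M → ℕ),
    (∑ j, c j).factorial * ∏ j, (c j)^(c j) ≤ (∑ j, c j)^(∑ j, c j) * ∏ j, (c j).factorial := by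
  intro M
  induction M with
  | zero => intro c; simp
  | succ M ih =>
    intro c
    rw [Fin.sum_univ_castSucc, Fin.prod_univ_castSucc, Fin.prod_univ_castSucc]
    set s := ∑ j : Fin M, c (j.castSucc) with hs
    set a := c (Fin.last M)
    have hfact : (s+a).factorial = (s+a).choose a * a.factorial * s.factorial := by
      have := Nat.choose_mul_factorial_mul_factorial (by omega : a ≤ s + a)
      simpa [Nat.add_sub_cancel] using this.symm
    have hih := ih (fun j => c (j.castSucc))
    have hb := binom_term_le s a
    calc (s+a).factorial * ((∏ j : Fin M, c j.castSucc ^ c j.castSucc) * a^a)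
        = (s+a).choose a * a.factorial * a^a * (s.factorial * ∏ j : Fin M, c j.castSucc ^ c j.castSucc) := by
          rw [hfact]; ring
      _ ≤ (s+a).choose a * a.factorial * a^a * (s^s * ∏ j : Fin M, (c j.castSucc).factorial) :=
          Nat.mul_le_mul_left _ hih
      _ = ((s+a).choose a * (s^s * a^a)) * ((∏ j : Fin M, (c j.castSucc).factorial) * a.factorial) := by ring
      _ ≤ (s+a)^(s+a) * ((∏ j : Fin M, (c j.castSucc).factorial) * a.factorial) :=
          Nat.mul_le_mul_right _ hb

lemma pow_self_le_exp_mul_fact (k : ℕ) : (k:ℝ)^k ≤ Real.exp 1 ^ k * k.factorial := by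
  have h := Real.pow_div_factorial_le_exp (x := (k:ℝ)) (by positivity) k
  rw [div_le_iff₀ (by positivity)] at h
  calc (k:ℝ)^k ≤ Real.exp k * k.factorial := h
    _ = Real.exp 1 ^ k * k.factorial := by rw [← Real.exp_one_pow]

lemma choose_le_real (n k : ℕ) :
    (((n+k).choose k : ℕ) : ℝ) ≤ (Real.exp 1 * (1 + (n:ℝ)/k))^k := by
  rcases Nat.eq_zero_or_pos k with hk | hk
  · subst hk; simp
  · have hk0 : (0:ℝ) < k := by exact_mod_cast hk
    have h1 : (((n+k).choose k : ℕ) : ℝ) ≤ ((n+k : ℕ):ℝ)^k / (k.factorial : ℝ) :=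
      Nat.choose_le_pow_div k (n+k)
    have h2 : (Real.exp 1 * (1 + (n:ℝ)/k))^k = Real.exp 1 ^ k * ((n:ℝ)+k)^k / (k:ℝ)^k := by
      have : (1 + (n:ℝ)/k) = ((n:ℝ)+k)/k := by field_simp; ring
      rw [this, mul_pow, div_pow, mul_div_assoc]
    rw [h2]
    refine h1.trans ?_
    rw [div_le_div_iff₀ (by positivity) (by positivity)]
    push_cast
    have h3 := pow_self_le_exp_mul_fact k
    calc ((n:ℝ)+k)^k * (k:ℝ)^k ≤ ((n:ℝ)+k)^k * (Real.exp 1 ^ k * k.factorial) :=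
          mul_le_mul_of_nonneg_left h3 (by positivity)
      _ = Real.exp 1 ^ k * ((n:ℝ)+(k:ℝ))^k * (k.factorial : ℝ) := by ring


lemma key_ineq {m : ℕ} (hm : 1 ≤ m) (p : Fin m → ℝ) (hp0 : ∀ j, 0 ≤ p j)
    {δ : ℝ} (hδ : 0 < δ) {n : ℕ} (hn : 0 < n) (c : Fin m → ℕ) (hc : ∑ j, c j = n)
    (hbad : (n:ℝ) * KLvec (fun j => (c j : ℝ)/(n:ℝ)) p
       > Real.log (1/δ) + ((m:ℝ)-1) * Real.log (Real.exp 1 * (1 + (n:ℝ)/((m:ℝ)-1)))) :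
    ∏ j, p j ^ c j
      ≤ δ * ((((m-1).factorial * ∏ j, (c j).factorial : ℕ) : ℝ)
          / (((n + (m-1)).factorial : ℕ) : ℝ)) := by
  set k := m - 1 with hkdef
  have hmk : (m:ℝ) - 1 = (k:ℝ) := by
    have hmm : m = k + 1 := by omega
    rw [hmm]; push_cast; ring
  by_cases hz : ∃ j, p j = 0 ∧ c j ≠ 0
  · obtain ⟨j0, hpj, hcj⟩ := hz
    have h0 : ∏ j, p j ^ c j = 0 :=
      Finset.prod_eq_zero (Finset.mem_univ j0) (by rw [hpj]; exact zero_pow hcj)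
    rw [h0]; positivity
  · push_neg at hz
    have hpos : ∀ j, c j ≠ 0 → 0 < p j := fun j hj =>
      (hp0 j).lt_of_ne (fun h => hj (hz j h.symm))
    set Ppow := ∏ j, p j ^ c j with hP
    set L := ∏ j, ((c j:ℝ)/(n:ℝ))^(c j) with hL
    have hnR : (0:ℝ) < n := by exact_mod_cast hn
    have hPpos : 0 < Ppow := Finset.prod_pos (fun j _ => by
      rcases Nat.eq_zero_or_pos (c j) with h|h
      · rw [h]; norm_num
      · exact pow_pos (hpos j h.ne') _)
    have hLpos : 0 < L := Finset.prod_pos (fun j _ => by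
      rcases Nat.eq_zero_or_pos (c j) with h|h
      · rw [h]; norm_num
      · refine pow_pos (div_pos ?_ hnR) _
        exact_mod_cast h)
    have hKL : (n:ℝ) * KLvec (fun j => (c j : ℝ)/(n:ℝ)) p = Real.log (L / Ppow) := by
      have h1 : ∀ j : Fin m, (n:ℝ) * ((c j:ℝ)/n * Real.log (((c j:ℝ)/n) / p j))
           = Real.log ((((c j:ℝ)/n) / p j) ^ c j) := by
        intro j
        rw [Real.log_pow, ← mul_assoc, mul_div_cancel₀ _ hnR.ne']
      have hne : ∀ j ∈ Finset.univ, ((((c j:ℝ)/n) / p j) ^ c j) ≠ 0 := by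
        intro j _
        rcases Nat.eq_zero_or_pos (c j) with h|h
        · rw [h, pow_zero]; norm_num
        · have hcp : (0:ℝ) < (c j:ℝ)/n := div_pos (by exact_mod_cast h) hnR
          exact pow_ne_zero _ (div_pos hcp (hpos j h.ne')).ne'
      rw [KLvec, Finset.mul_sum, Finset.sum_congr rfl (fun j _ => h1 j),
        ← Real.log_prod hne]
      congr 1
      rw [hL, hP, ← Finset.prod_div_distrib]
      exact Finset.prod_congr rfl (fun j _ => div_pow _ _ _)
    set x := Real.exp 1 * (1 + (n:ℝ)/(k:ℝ)) with hx
    have hxpos : 0 < x := by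
      have h1 : 0 ≤ (n:ℝ)/(k:ℝ) := by positivity
      have h2 := Real.exp_pos 1
      nlinarith
    have hbad' : Real.log (1/δ * x^k) < Real.log (L/Ppow) := by
      rw [Real.log_mul (by positivity) (by positivity), Real.log_pow]
      rw [hmk] at hbad
      rw [← hKL]
      linarith
    have hlt : 1/δ * x^k < L / Ppow :=
      (Real.log_lt_log_iff (by positivity) (by positivity)).mp hbad'
    have hPle : Ppow ≤ δ * L / x^k := by
      have h2 : 1/δ * x^k * Ppow < L := (lt_div_iff₀ hPpos).mp hlt
      rw [le_div_iff₀ (by positivity)]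
      calc Ppow * x^k = δ * (1/δ * x^k * Ppow) := by field_simp
        _ ≤ δ * L := mul_le_mul_of_nonneg_left h2.le hδ.le
    set P := ∏ j, ((c j).factorial : ℝ) with hPf
    have hPfpos : 0 < P := Finset.prod_pos (fun j _ => by positivity)
    have hLle : L ≤ P / (n.factorial : ℝ) := by
      have hnat := fact_mul_prod_le m c
      rw [hc] at hnat
      have hLeq : L = (∏ j, ((c j):ℝ)^(c j)) / (n:ℝ)^n := by
        rw [hL]
        simp_rw [div_pow]
        rw [Finset.prod_div_distrib, Finset.prod_pow_eq_pow_sum, hc]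
      rw [hLeq, div_le_div_iff₀ (by positivity) (by positivity)]
      have : ((n.factorial : ℕ):ℝ) * ∏ j, ((c j):ℝ)^(c j) ≤ ((n:ℝ))^n * P := by
        rw [hPf]
        exact_mod_cast hnat
      linarith [this]
    have hch : ((n+k).factorial : ℝ) ≤ x^k * (n.factorial : ℝ) * (k.factorial : ℝ) := by
      have h1 := choose_le_real n k
      have h2 : (n+k).choose k * k.factorial * n.factorial = (n+k).factorial := by
        have h3 := Nat.choose_mul_factorial_mul_factorial (Nat.le_add_left k n)
        simpa [Nat.add_sub_cancel] using h3
      calc ((n+k).factorial:ℝ) = ((n+k).choose k : ℝ) * k.factorial * n.factorial := by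
            exact_mod_cast h2.symm
        _ ≤ x^k * k.factorial * n.factorial := by
            have := mul_le_mul_of_nonneg_right h1 (by positivity : (0:ℝ) ≤ (k.factorial:ℝ))
            exact mul_le_mul_of_nonneg_right this (by positivity)
        _ = x^k * n.factorial * k.factorial := by ring
    have hmid : δ * L / x^k ≤ δ * ((k.factorial : ℝ) * P) / ((n+k).factorial:ℝ) := by
      rw [div_le_div_iff₀ (by positivity) (by positivity)]
      calc δ * L * ((n+k).factorial:ℝ) ≤ δ * (P / (n.factorial:ℝ)) * ((n+k).factorial:ℝ) := by
            have := mul_le_mul_of_nonneg_left hLle hδ.le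
            exact mul_le_mul_of_nonneg_right this (by positivity)
        _ ≤ δ * (P / (n.factorial:ℝ)) * (x^k * (n.factorial:ℝ) * (k.factorial:ℝ)) := by
            have h4 : 0 ≤ δ * (P / (n.factorial:ℝ)) := by positivity
            exact mul_le_mul_of_nonneg_left hch h4
        _ = δ * ((k.factorial:ℝ) * P) * x^k := by field_simp
    calc Ppow ≤ δ * L / x^k := hPle
      _ ≤ δ * ((k.factorial : ℝ) * P) / ((n+k).factorial:ℝ) := hmid
      _ = δ * ((((k).factorial * ∏ j, (c j).factorial : ℕ) : ℝ) / (((n + k).factorial : ℕ) : ℝ)) := by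
          rw [hPf]; push_cast; ring


namespace S11
variable {m : ℕ}

def cnt {n : ℕ} (w : Fin n → Fin m) (j : Fin m) : ℕ :=
  (Finset.univ.filter (fun i => w i = j)).card

lemma sum_cnt {n : ℕ} (w : Fin n → Fin m) : ∑ j, cnt w j = n := by
  classical
  have := Finset.card_eq_sum_card_fiberwise
    (f := w) (s := Finset.univ) (t := Finset.univ) (fun i _ => Finset.mem_univ _)
  simpa [cnt] using this.symm

lemma cnt_snoc {n : ℕ} (w : Fin n → Fin m) (a j : Fin m) :
    cnt (Fin.snoc w a) j = cnt w j + if a = j then 1 else 0 := by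
  classical
  simp only [cnt, Finset.card_filter]
  rw [Fin.sum_univ_castSucc]
  simp [Fin.snoc_castSucc, Fin.snoc_last]

noncomputable def Qr (m : ℕ) (n : ℕ) (w : Fin n → Fin m) : ℝ :=
  (((m-1).factorial * ∏ j, (cnt w j).factorial : ℕ) : ℝ)
    / (((n + (m-1)).factorial : ℕ) : ℝ)

lemma Qr_nonneg {n : ℕ} (w : Fin n → Fin m) : 0 ≤ Qr m n w := by
  unfold Qr; positivity

lemma Qr_zero (w : Fin 0 → Fin m) : Qr m 0 w = 1 := by
  unfold Qr
  have h : ∀ j, cnt w j = 0 := by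
    intro j; simp [cnt]
  simp [h]
  exact Nat.factorial_ne_zero _

lemma Qr_snoc_sum (hm : 1 ≤ m) {n : ℕ} (w : Fin n → Fin m) :
    ∑ a, Qr m (n+1) (Fin.snoc w a) = Qr m n w := by
  classical
  have hprod : ∀ a : Fin m, ∏ j, (cnt (Fin.snoc w a) j).factorial
      = (cnt w a + 1) * ∏ j, (cnt w j).factorial := by
    intro a
    rw [← Finset.mul_prod_erase Finset.univ _ (Finset.mem_univ a),
        ← Finset.mul_prod_erase Finset.univ (fun j => (cnt w j).factorial) (Finset.mem_univ a)]
    have hrest : ∏ x ∈ Finset.univ.erase a, (cnt (Fin.snoc w a) x).factorial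
        = ∏ x ∈ Finset.univ.erase a, (cnt w x).factorial :=
      Finset.prod_congr rfl (fun j hj => by
        rw [cnt_snoc]
        have hne : a ≠ j := fun h => by simp [h] at hj
        simp [hne])
    rw [hrest, cnt_snoc]
    simp [Nat.factorial_succ]
    ring
  have hden : ((n+1) + (m-1)).factorial = (n + (m-1)).factorial * (n + m) := by
    have h1 : (n+1) + (m-1) = (n + (m-1)) + 1 := by omega
    rw [h1, Nat.factorial_succ]
    have : n + (m-1) + 1 = n + m := by omega
    rw [this]; ring
  have hsum : ∑ a : Fin m, ((cnt w a : ℝ) + 1) = (n : ℝ) + m := by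
    rw [Finset.sum_add_distrib]
    simp [Finset.card_univ]
    have : ∑ a : Fin m, (cnt w a : ℝ) = ((∑ a, cnt w a : ℕ) : ℝ) := by push_cast; ring
    rw [this, sum_cnt]
  have hnm : (0:ℝ) < (n:ℝ) + m := by
    have : (0:ℝ) < (m:ℝ) := by exact_mod_cast hm
    positivity
  calc ∑ a, Qr m (n+1) (Fin.snoc w a)
      = ∑ a : Fin m, ((cnt w a : ℝ) + 1) * ((((m-1).factorial * ∏ j, (cnt w j).factorial : ℕ):ℝ)
          / (((n + (m-1)).factorial : ℕ):ℝ) / ((n:ℝ) + m)) := by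
        refine Finset.sum_congr rfl (fun a _ => ?_)
        unfold Qr
        rw [hprod a, hden]
        push_cast
        have h2 : ((n + (m-1)).factorial : ℝ) ≠ 0 := by positivity
        field_simp
    _ = ((n:ℝ) + m) * ((((m-1).factorial * ∏ j, (cnt w j).factorial : ℕ):ℝ)
          / (((n + (m-1)).factorial : ℕ):ℝ) / ((n:ℝ) + m)) := by
        rw [← Finset.sum_mul, hsum]
    _ = Qr m n w := by
        unfold Qr
        field_simp

variable (p : Fin m → ℝ) (δ : ℝ)

def bad (n : ℕ) (w : Fin n → Fin m) : Prop :=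
  0 < n ∧ (n : ℝ) * KLvec (fun j => (cnt w j : ℝ) / (n:ℝ)) p
      > Real.log (1 / δ)
        + ((m : ℝ) - 1) * Real.log (Real.exp 1 * (1 + (n : ℝ) / ((m : ℝ) - 1)))

def stopped (n : ℕ) (w : Fin n → Fin m) : Prop :=
  bad p δ n w ∧ ∀ kk, ∀ h : kk < n, ¬ bad p δ kk (w ∘ Fin.castLE h.le)

def alive (n : ℕ) (w : Fin n → Fin m) : Prop :=
  ∀ kk, ∀ h : kk ≤ n, ¬ bad p δ kk (w ∘ Fin.castLE h)

open Classical in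
noncomputable def StopF (n : ℕ) : Finset (Fin n → Fin m) :=
  Finset.univ.filter (stopped p δ n)

open Classical in
noncomputable def AliveF (n : ℕ) : Finset (Fin n → Fin m) :=
  Finset.univ.filter (alive p δ n)

lemma comp_castLE_refl {n : ℕ} (w : Fin n → Fin m) :
    w ∘ Fin.castLE (le_refl n) = w := by
  funext i; congr 1

lemma comp_castLE_comp {n kk : ℕ} (w : Fin (n+1) → Fin m) (h : kk ≤ n) :
    (Fin.init w) ∘ Fin.castLE h = w ∘ Fin.castLE (h.trans (Nat.le_succ n)) := by
  funext i
  simp only [Function.comp_apply, Fin.init]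
  congr 1

lemma step_ineq (hm : 1 ≤ m) (N : ℕ) :
    ∑ w ∈ StopF p δ (N+1), Qr m (N+1) w + ∑ w ∈ AliveF p δ (N+1), Qr m (N+1) w
      ≤ ∑ w ∈ AliveF p δ N, Qr m N w := by
  classical
  have hdisj : Disjoint (StopF p δ (N+1)) (AliveF p δ (N+1)) := by
    rw [Finset.disjoint_left]
    intro w hw hw'
    rw [StopF, Finset.mem_filter] at hw
    rw [AliveF, Finset.mem_filter] at hw'
    have h1 := hw.2.1
    have h2 := hw'.2 (N+1) (le_refl _)
    rw [comp_castLE_refl] at h2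
    exact h2 h1
  rw [← Finset.sum_union hdisj]
  have hsub : StopF p δ (N+1) ∪ AliveF p δ (N+1)
      ⊆ (AliveF p δ N ×ˢ Finset.univ).image (fun q => Fin.snoc q.1 q.2) := by
    intro w hw
    have halive : Fin.init w ∈ AliveF p δ N := by
      rw [AliveF, Finset.mem_filter]
      refine ⟨Finset.mem_univ _, fun kk h => ?_⟩
      rw [comp_castLE_comp]
      rcases Finset.mem_union.mp hw with h1 | h1
      · rw [StopF, Finset.mem_filter] at h1
        exact h1.2.2 kk (by omega)
      · rw [AliveF, Finset.mem_filter] at h1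
        exact h1.2 kk (by omega)
    refine Finset.mem_image.mpr ⟨(Fin.init w, w (Fin.last N)), ?_, ?_⟩
    · exact Finset.mem_product.mpr ⟨halive, Finset.mem_univ _⟩
    · exact Fin.snoc_init_self w
  calc ∑ w ∈ StopF p δ (N+1) ∪ AliveF p δ (N+1), Qr m (N+1) w
      ≤ ∑ q ∈ (AliveF p δ N ×ˢ Finset.univ).image (fun q => Fin.snoc q.1 q.2), Qr m (N+1) q :=
        Finset.sum_le_sum_of_subset_of_nonneg hsub (fun w _ _ => Qr_nonneg w)
    _ = ∑ q ∈ AliveF p δ N ×ˢ Finset.univ, Qr m (N+1) (Fin.snoc q.1 q.2) := by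
        refine Finset.sum_image ?_
        intro q1 _ q2 _ heq
        have h1 := congrArg Fin.init heq
        have h2 := congrFun heq (Fin.last N)
        simp only [Fin.init_snoc] at h1
        simp only [Fin.snoc_last] at h2
        exact Prod.ext h1 h2
    _ = ∑ w ∈ AliveF p δ N, ∑ a, Qr m (N+1) (Fin.snoc w a) := by
        rw [Finset.sum_product]
    _ = ∑ w ∈ AliveF p δ N, Qr m N w :=
        Finset.sum_congr rfl (fun w _ => Qr_snoc_sum hm w)

lemma invariant (hm : 1 ≤ m) :
    ∀ N : ℕ, (∑ n ∈ Finset.range (N+1), ∑ w ∈ StopF p δ n, Qr m n w)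
      + ∑ w ∈ AliveF p δ N, Qr m N w ≤ 1 := by
  classical
  intro N
  induction N with
  | zero =>
    have hstop : StopF p δ 0 = (∅ : Finset (Fin 0 → Fin m)) := by
      rw [StopF]
      refine Finset.filter_false_of_mem (fun w _ hw => ?_)
      exact absurd hw.1.1 (lt_irrefl 0)
    have halive : AliveF p δ 0 = (Finset.univ : Finset (Fin 0 → Fin m)) := by
      rw [AliveF]
      refine Finset.filter_true_of_mem (fun w _ => ?_)
      intro kk h hb
      have : kk = 0 := Nat.le_zero.mp h
      subst this
      exact absurd hb.1 (lt_irrefl 0)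
    rw [Finset.sum_range_one, hstop, halive]
    have huniv : (Finset.univ : Finset (Fin 0 → Fin m)) = {(Fin.elim0 : Fin 0 → Fin m)} := by
      apply Finset.eq_singleton_iff_unique_mem.mpr
      exact ⟨Finset.mem_univ _, fun w _ => funext (fun i => i.elim0)⟩
    rw [huniv]
    simp [Qr_zero]
  | succ N ih =>
    rw [Finset.sum_range_succ]
    have := step_ineq p δ hm N
    linarith

end S11

namespace S11

lemma cnt_eq_range {m n : ℕ} (X : ℕ → Fin m) (j : Fin m) :
    ((Finset.range n).filter (fun i => X i = j)).card
      = cnt (fun i : Fin n => X i.1) j := by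
  unfold cnt
  beta_reduce
  rw [← Finset.card_image_of_injective (Finset.univ.filter (fun i : Fin n => X i.1 = j))
    Fin.val_injective]
  congr 1
  ext a
  simp only [Finset.mem_image, Finset.mem_filter, Finset.mem_univ, true_and, Finset.mem_range]
  constructor
  · rintro ⟨hlt, hP⟩; exact ⟨⟨a, hlt⟩, hP, rfl⟩
  · rintro ⟨i, hP, rfl⟩; exact ⟨i.2, hP⟩

lemma cyl_measure {Ω : Type*} [MeasurableSpace Ω] (μ : Measure Ω) {m : ℕ} (p : Fin m → ℝ)
    (hp0 : ∀ j, 0 ≤ p j) (X : ℕ → Ω → Fin m)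
    (hindep : iIndepFun X μ)
    (hid : ∀ i j, μ {ω | X i ω = j} = ENNReal.ofReal (p j))
    (n : ℕ) (w : Fin n → Fin m) :
    μ {ω | ∀ i : Fin n, X i.1 ω = w i} = ENNReal.ofReal (∏ j, p j ^ cnt w j) := by
  classical
  set sets : ℕ → Set (Fin m) := fun i => if h : i < n then {w ⟨i,h⟩} else Set.univ with hsets
  set f' : ℕ → Set Ω := fun i => X i ⁻¹' sets i with hf'
  have hset : {ω | ∀ i : Fin n, X i.1 ω = w i} = ⋂ i ∈ Finset.range n, f' i := by
    ext ω
    simp only [Set.mem_setOf_eq, Set.mem_iInter, Finset.mem_range, hf', Set.mem_preimage, hsets]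
    constructor
    · intro h i hi
      rw [dif_pos hi]
      exact h ⟨i, hi⟩
    · intro h i
      have := h i.1 i.2
      rw [dif_pos i.2] at this
      simpa using this
  have hmeasb : ∀ i ∈ Finset.range n,
      MeasurableSet[MeasurableSpace.comap (X i) inferInstance] (f' i) :=
    fun i _ => ⟨sets i, (Set.toFinite _).measurableSet, rfl⟩
  rw [hset, hindep.meas_biInter hmeasb]
  set g : ℕ → ENNReal := fun i => if h : i < n then ENNReal.ofReal (p (w ⟨i,h⟩)) else 1 with hg
  have hterm : ∀ i ∈ Finset.range n, μ (f' i) = g i := by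
    intro i hi
    have hi' := Finset.mem_range.mp hi
    simp only [hf', hsets, hg, dif_pos hi']
    rw [show X i ⁻¹' {w ⟨i,hi'⟩} = {ω | X i ω = w ⟨i,hi'⟩} from by ext ω; simp]
    exact hid i _
  rw [Finset.prod_congr rfl hterm, ← Fin.prod_univ_eq_prod_range g n]
  have hgval : ∀ i : Fin n, g i.1 = ENNReal.ofReal (p (w i)) := by
    intro i
    simp only [hg, dif_pos i.2]
  rw [Finset.prod_congr rfl (fun i _ => hgval i),
    ← ENNReal.ofReal_prod_of_nonneg (fun i _ => hp0 (w i))]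
  congr 1
  rw [← Finset.prod_fiberwise_of_maps_to (g := w) (fun i _ => Finset.mem_univ (w i))
    (fun i => p (w i))]
  refine Finset.prod_congr rfl (fun j _ => ?_)
  rw [Finset.prod_congr rfl (fun i hi => by
    rw [(Finset.mem_filter.mp hi).2]),
    Finset.prod_const]
  rfl

end S11
end Aux

theorem stmt11 {Ω : Type*} [MeasurableSpace Ω] (μ : Measure Ω) [IsProbabilityMeasure μ]
    (m : ℕ) (p : Fin m → ℝ)
    (hp : (∀ j, 0 ≤ p j) ∧ ∑ j, p j = 1)
    (X : ℕ → Ω → Fin m) (hmeas : ∀ i, Measurable (X i))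
    (hindep : iIndepFun X μ)
    (hid : ∀ i j, μ {ω | X i ω = j} = ENNReal.ofReal (p j))
    (δ : ℝ) (hδ : 0 < δ) :
    μ {ω | ∃ n : ℕ, 0 < n ∧
        (n : ℝ) * KLvec (empFreq X n ω) p
          > Real.log (1 / δ)
            + ((m : ℝ) - 1) * Real.log (Real.exp 1 * (1 + (n : ℝ) / ((m : ℝ) - 1)))}
      ≤ ENNReal.ofReal δ := by
  classical
  obtain ⟨hp0, hp1⟩ := hp
  have hm : 1 ≤ m := by
    by_contra h
    have hz : m = 0 := by omega
    subst hz
    simp at hp1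
  have hfreq : ∀ (ω : Ω) (n : ℕ), 0 < n →
      empFreq X n ω = fun j => (S11.cnt (fun i : Fin n => X i.1 ω) j : ℝ) / n := by
    intro ω n _
    funext j
    unfold empFreq
    congr 2
    exact S11.cnt_eq_range (fun i => X i ω) j
  have hsub : {ω | ∃ n : ℕ, 0 < n ∧
        (n : ℝ) * KLvec (empFreq X n ω) p
          > Real.log (1 / δ)
            + ((m : ℝ) - 1) * Real.log (Real.exp 1 * (1 + (n : ℝ) / ((m : ℝ) - 1)))}
      ⊆ ⋃ n : ℕ, ⋃ w ∈ S11.StopF p δ n, {ω | ∀ i : Fin n, X i.1 ω = w i} := by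
    intro ω hω
    obtain ⟨n, hn, hineq⟩ := hω
    have hbadn : S11.bad p δ n (fun i : Fin n => X i.1 ω) := by
      refine ⟨hn, ?_⟩
      rw [← hfreq ω n hn]
      exact hineq
    have hex : ∃ nn, S11.bad p δ nn (fun i : Fin nn => X i.1 ω) := ⟨n, hbadn⟩
    refine Set.mem_iUnion.mpr ⟨Nat.find hex, Set.mem_iUnion₂.mpr
      ⟨fun i => X i.1 ω, ?_, fun i => rfl⟩⟩
    rw [S11.StopF, Finset.mem_filter]
    refine ⟨Finset.mem_univ _, Nat.find_spec hex, fun kk h => ?_⟩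
    have hmin := Nat.find_min hex h
    have hcomp : (fun i : Fin (Nat.find hex) => X i.1 ω) ∘ Fin.castLE h.le
        = fun i : Fin kk => X i.1 ω := by
      funext i; rfl
    rw [hcomp]
    exact hmin
  have hcylm : ∀ (n : ℕ) (w : Fin n → Fin m),
      μ {ω | ∀ i : Fin n, X i.1 ω = w i} = ENNReal.ofReal (∏ j, p j ^ S11.cnt w j) :=
    S11.cyl_measure μ p hp0 X hindep hid
  have hperword : ∀ (n : ℕ), ∀ w ∈ S11.StopF p δ n,
      (∏ j, p j ^ S11.cnt w j) ≤ δ * S11.Qr m n w := by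
    intro n w hw
    rw [S11.StopF, Finset.mem_filter] at hw
    obtain ⟨-, ⟨hnpos, hineq⟩, -⟩ := hw
    exact key_ineq hm p hp0 hδ hnpos (S11.cnt w) (S11.sum_cnt w) hineq
  set q : ℕ → ℝ := fun n => ∑ w ∈ S11.StopF p δ n, S11.Qr m n w with hq
  have hqnn : ∀ n, 0 ≤ q n := fun n => Finset.sum_nonneg (fun w _ => S11.Qr_nonneg w)
  have hqsum : ∀ N : ℕ, ∑ n ∈ Finset.range N, q n ≤ 1 := by
    intro N
    rcases Nat.eq_zero_or_pos N with h | h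
    · subst h; simp
    · obtain ⟨N', rfl⟩ : ∃ N', N = N' + 1 := ⟨N - 1, by omega⟩
      have hinv := S11.invariant p δ hm N'
      have halnn : 0 ≤ ∑ w ∈ S11.AliveF p δ N', S11.Qr m N' w :=
        Finset.sum_nonneg (fun w _ => S11.Qr_nonneg w)
      linarith
  calc μ {ω | ∃ n : ℕ, 0 < n ∧
        (n : ℝ) * KLvec (empFreq X n ω) p
          > Real.log (1 / δ)
            + ((m : ℝ) - 1) * Real.log (Real.exp 1 * (1 + (n : ℝ) / ((m : ℝ) - 1)))}
      ≤ μ (⋃ n : ℕ, ⋃ w ∈ S11.StopF p δ n, {ω | ∀ i : Fin n, X i.1 ω = w i}) :=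
        measure_mono hsub
    _ ≤ ∑' n : ℕ, μ (⋃ w ∈ S11.StopF p δ n, {ω | ∀ i : Fin n, X i.1 ω = w i}) :=
        measure_iUnion_le _
    _ ≤ ∑' n : ℕ, ENNReal.ofReal (δ * q n) := by
        refine ENNReal.tsum_le_tsum (fun n => ?_)
        calc μ (⋃ w ∈ S11.StopF p δ n, {ω | ∀ i : Fin n, X i.1 ω = w i})
            ≤ ∑ w ∈ S11.StopF p δ n, μ {ω | ∀ i : Fin n, X i.1 ω = w i} :=
              measure_biUnion_finset_le _ _
          _ = ∑ w ∈ S11.StopF p δ n, ENNReal.ofReal (∏ j, p j ^ S11.cnt w j) :=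
              Finset.sum_congr rfl (fun w _ => hcylm n w)
          _ ≤ ∑ w ∈ S11.StopF p δ n, ENNReal.ofReal (δ * S11.Qr m n w) :=
              Finset.sum_le_sum (fun w hw => ENNReal.ofReal_le_ofReal (hperword n w hw))
          _ = ENNReal.ofReal (∑ w ∈ S11.StopF p δ n, δ * S11.Qr m n w) :=
              (ENNReal.ofReal_sum_of_nonneg (fun w _ => by
                have := S11.Qr_nonneg (m := m) w; positivity)).symm
          _ = ENNReal.ofReal (δ * q n) := by rw [hq, Finset.mul_sum]
    _ ≤ ENNReal.ofReal δ := by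
        rw [ENNReal.tsum_eq_iSup_nat]
        refine iSup_le (fun N => ?_)
        rw [← ENNReal.ofReal_sum_of_nonneg (fun n _ => by
          have := hqnn n; positivity)]
        refine ENNReal.ofReal_le_ofReal ?_
        rw [← Finset.mul_sum]
        calc δ * ∑ n ∈ Finset.range N, q n ≤ δ * 1 :=
              mul_le_mul_of_nonneg_left (hqsum N) hδ.le
          _ = δ := mul_one δ
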